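/- arXiv:math/0603322 — 2 statements merged into one kernel-verified Lean document; each statement's English description precedes it below -/
import Mathlib

section
/- Let A be a bounded operator on ℓ²(ℤ) that is a finite product A = L(a₁) b₁ L(a₂) b₂ ⋯ L(a_k) b_k, where each L(a_i) is a bounded Laurent operator (bi-infinite Toeplitz matrix) and each b_i is the operator of multiplication by an almost periodic function on ℤ. Then the main diagonal D(A) of A is an almost periodic function on ℤ. -/
noncomputable section

/-- The Hilbert space `ℓ²(ℤ)`. -/
abbrev HZ : Type := lp (fun _ : ℤ => ℂ) 2

/-- The standard orthonormal basis of `ℓ²(ℤ)`. -/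
def eZ (i : ℤ) : HZ := lp.single 2 i 1

/-- The translate `a_k`, `a_k (n) = a (n + k)`, of a bounded function on `ℤ`. -/
def shiftBCF (a : BoundedContinuousFunction ℤ ℂ) (k : ℤ) : BoundedContinuousFunction ℤ ℂ :=
  a.compContinuous ⟨fun n => n + k, continuous_of_discreteTopology⟩

/-- A bounded function on `ℤ` is almost periodic if its set of translates is
relatively compact in `ℓ^∞(ℤ)`. -/
def AlmostPeriodic (a : BoundedContinuousFunction ℤ ℂ) : Prop :=
  IsCompact (closure (Set.range (shiftBCF a)))


open scoped ENNReal

namespace APDiagAux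

lemma two_pos : (0:ℝ) < (2 : ℝ≥0∞).toReal := by norm_num

lemma memHZ (f : ℤ → ℂ) (x : HZ) (C : ℝ) (hC : 0 ≤ C)
    (h : ∀ m, ‖f m‖ ≤ C * ‖(x : ∀ _ : ℤ, ℂ) m‖) : Memℓp f 2 := by
  apply memℓp_gen
  have hx : Summable (fun m : ℤ => ‖(x : ∀ _ : ℤ, ℂ) m‖ ^ (2:ℝ≥0∞).toReal) :=
    (lp.memℓp x).summable two_pos
  refine Summable.of_nonneg_of_le (fun m => ?_) (fun m => ?_)
    (hx.mul_left (C ^ (2:ℝ≥0∞).toReal))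
  · positivity
  · calc ‖f m‖ ^ (2:ℝ≥0∞).toReal
        ≤ (C * ‖(x : ∀ _ : ℤ, ℂ) m‖) ^ (2:ℝ≥0∞).toReal :=
          Real.rpow_le_rpow (norm_nonneg _) (h m) two_pos.le
      _ = C ^ (2:ℝ≥0∞).toReal * ‖(x : ∀ _ : ℤ, ℂ) m‖ ^ (2:ℝ≥0∞).toReal :=
          Real.mul_rpow hC (norm_nonneg _)

lemma normHZ_le (y x : HZ) (C : ℝ) (hC : 0 ≤ C)
    (h : ∀ m, ‖(y : ∀ _ : ℤ, ℂ) m‖ ≤ C * ‖(x : ∀ _ : ℤ, ℂ) m‖) : ‖y‖ ≤ C * ‖x‖ := by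
  refine lp.norm_le_of_tsum_le two_pos (by positivity) ?_
  have hx : Summable (fun m : ℤ => ‖(x : ∀ _ : ℤ, ℂ) m‖ ^ (2:ℝ≥0∞).toReal) :=
    (lp.memℓp x).summable two_pos
  have hy : Summable (fun m : ℤ => ‖(y : ∀ _ : ℤ, ℂ) m‖ ^ (2:ℝ≥0∞).toReal) :=
    (lp.memℓp y).summable two_pos
  calc ∑' m, ‖(y : ∀ _ : ℤ, ℂ) m‖ ^ (2:ℝ≥0∞).toReal
      ≤ ∑' m, C ^ (2:ℝ≥0∞).toReal * ‖(x : ∀ _ : ℤ, ℂ) m‖ ^ (2:ℝ≥0∞).toReal := by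
        refine hy.tsum_le_tsum (fun m => ?_) (hx.mul_left _)
        rw [← Real.mul_rpow hC (norm_nonneg _)]
        exact Real.rpow_le_rpow (norm_nonneg _) (h m) two_pos.le
    _ = C ^ (2:ℝ≥0∞).toReal * ‖x‖ ^ (2:ℝ≥0∞).toReal := by
        rw [tsum_mul_left, lp.norm_rpow_eq_tsum two_pos]
    _ = (C * ‖x‖) ^ (2:ℝ≥0∞).toReal := (Real.mul_rpow hC (norm_nonneg _)).symm

/-- Multiplication operator. -/
def mult (c : BoundedContinuousFunction ℤ ℂ) : HZ →L[ℂ] HZ :=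
  LinearMap.mkContinuous
    { toFun := fun x => ⟨fun m => c m * x m,
        memHZ _ x ‖c‖ (norm_nonneg _) (fun m => by
          rw [norm_mul]
          exact mul_le_mul_of_nonneg_right (c.norm_coe_le_norm m) (norm_nonneg _))⟩
      map_add' := fun x y => lp.ext (funext fun m => by
        simp only [lp.coeFn_add, Pi.add_apply]
        show c m * ((x : ∀ _ : ℤ, ℂ) m + (y : ∀ _ : ℤ, ℂ) m)
          = c m * (x : ∀ _ : ℤ, ℂ) m + c m * (y : ∀ _ : ℤ, ℂ) m
        ring)
      map_smul' := fun r x => lp.ext (funext fun m => by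
        simp only [lp.coeFn_smul, Pi.smul_apply, RingHom.id_apply, smul_eq_mul]
        show c m * (r * (x : ∀ _ : ℤ, ℂ) m) = r * (c m * (x : ∀ _ : ℤ, ℂ) m)
        ring) }
    ‖c‖ (fun x => normHZ_le _ x ‖c‖ (norm_nonneg _) (fun m => by
      show ‖c m * (x : ∀ _ : ℤ, ℂ) m‖ ≤ _
      rw [norm_mul]
      exact mul_le_mul_of_nonneg_right (c.norm_coe_le_norm m) (norm_nonneg _)))

lemma mult_apply (c : BoundedContinuousFunction ℤ ℂ) (x : HZ) (m : ℤ) :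
    (mult c x : ∀ _ : ℤ, ℂ) m = c m * x m := rfl

lemma mult_norm_le (c : BoundedContinuousFunction ℤ ℂ) : ‖mult c‖ ≤ ‖c‖ :=
  LinearMap.mkContinuous_norm_le _ (norm_nonneg c) _

lemma mult_sub (c d : BoundedContinuousFunction ℤ ℂ) : mult (c - d) = mult c - mult d := by
  refine ContinuousLinearMap.ext fun x => lp.ext (funext fun m => ?_)
  simp only [ContinuousLinearMap.sub_apply, lp.coeFn_sub, Pi.sub_apply, mult_apply]
  show (c - d) m * _ = _
  simp only [BoundedContinuousFunction.coe_sub, Pi.sub_apply]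
  ring

lemma mult_continuous : Continuous mult := by
  refine (LipschitzWith.of_dist_le_mul (K := 1) fun c d => ?_).continuous
  have : dist (mult c) (mult d) ≤ dist c d := by
    rw [dist_eq_norm, dist_eq_norm, ← mult_sub]
    exact mult_norm_le _
  simpa using this





/-- Translation operator: `(tr n x) m = x (m + n)`. -/
def tr (n : ℤ) : HZ →L[ℂ] HZ :=
  LinearMap.mkContinuous
    { toFun := fun x => ⟨fun m => x (m + n), by
        apply memℓp_gen
        exact ((Equiv.addRight n).summable_iff
          (f := fun m : ℤ => ‖(x : ∀ _ : ℤ, ℂ) m‖ ^ (2:ℝ≥0∞).toReal)).2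
          ((lp.memℓp x).summable two_pos)⟩
      map_add' := fun x y => lp.ext (funext fun m => by
        simp only [lp.coeFn_add, Pi.add_apply])
      map_smul' := fun r x => lp.ext (funext fun m => by
        simp only [lp.coeFn_smul, Pi.smul_apply, RingHom.id_apply]) }
    1 (fun x => by
      have key : ∑' m : ℤ, ‖(x : ∀ _ : ℤ, ℂ) (m + n)‖ ^ (2:ℝ≥0∞).toReal
          = ∑' m : ℤ, ‖(x : ∀ _ : ℤ, ℂ) m‖ ^ (2:ℝ≥0∞).toReal :=
        (Equiv.addRight n).tsum_eq (fun m : ℤ => ‖(x : ∀ _ : ℤ, ℂ) m‖ ^ (2:ℝ≥0∞).toReal)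
      rw [one_mul]
      refine lp.norm_le_of_tsum_le two_pos (norm_nonneg x) ?_
      have goal2 : (∑' m : ℤ, ‖(x : ∀ _ : ℤ, ℂ) (m + n)‖ ^ (2:ℝ≥0∞).toReal)
          ≤ ‖x‖ ^ (2:ℝ≥0∞).toReal := by
        rw [key, lp.norm_rpow_eq_tsum two_pos x]
      exact goal2)

lemma tr_apply (n : ℤ) (x : HZ) (m : ℤ) : (tr n x : ∀ _ : ℤ, ℂ) m = x (m + n) := rfl

lemma eZ_apply (i m : ℤ) : (eZ i : ∀ _ : ℤ, ℂ) m = if m = i then 1 else 0 := by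
  rw [eZ, lp.single_apply]
  split_ifs with h <;> simp [h]

lemma tr_eZ (n i : ℤ) : tr n (eZ i) = eZ (i - n) := by
  apply lp.ext
  funext m
  rw [tr_apply, eZ_apply, eZ_apply]
  by_cases h : m = i - n
  · rw [if_pos h, if_pos (by omega)]
  · rw [if_neg h, if_neg (by omega)]

lemma inner_eZ (i : ℤ) (y : HZ) : (inner ℂ (eZ i) y : ℂ) = y i := by
  rw [eZ, lp.inner_single_left]
  simp [RCLike.inner_apply]

/-- A Laurent operator commutes with translations. -/
lemma tr_comm_laurent (Lop : HZ →L[ℂ] HZ) (a : ℤ → ℂ)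
    (h : ∀ i j : ℤ, (Lop (eZ j) : ∀ _ : ℤ, ℂ) i = a (i - j)) (n : ℤ) :
    (tr n) * Lop = Lop * (tr n) := by
  refine ContinuousLinearMap.ext fun x => ?_
  have hbasis : ∀ j : ℤ, tr n (Lop (eZ j)) = Lop (tr n (eZ j)) := by
    intro j
    rw [tr_eZ]
    apply lp.ext
    funext m
    rw [tr_apply, h, h]
    congr 1
    omega
  have hx : HasSum (fun j : ℤ => lp.single 2 j (x j)) x :=
    lp.hasSum_single (by norm_num) x
  have h1 : HasSum (fun j : ℤ => tr n (Lop (lp.single 2 j (x j)))) (tr n (Lop x)) :=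
    ((tr n).comp Lop).hasSum hx
  have h2 : HasSum (fun j : ℤ => Lop (tr n (lp.single 2 j (x j)))) (Lop (tr n x)) :=
    (Lop.comp (tr n)).hasSum hx
  have hterm : ∀ j : ℤ, tr n (Lop (lp.single 2 j (x j))) = Lop (tr n (lp.single 2 j (x j))) := by
    intro j
    have hsingle : lp.single 2 j ((x : ∀ _ : ℤ, ℂ) j) = (x : ∀ _ : ℤ, ℂ) j • eZ j := by
      rw [eZ, ← lp.single_smul]
      norm_num
    rw [hsingle, map_smul, map_smul, map_smul, map_smul, hbasis]
  have h2' : HasSum (fun j : ℤ => tr n (Lop (lp.single 2 j (x j)))) (Lop (tr n x)) := by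
    simpa only [hterm] using h2
  exact h1.unique h2'

/-- The diagonal of a bounded operator, as a bounded function. -/
def diagBCF (P : HZ →L[ℂ] HZ) : BoundedContinuousFunction ℤ ℂ :=
  BoundedContinuousFunction.ofNormedAddCommGroup (fun i => inner ℂ (eZ i) (P (eZ i)))
    continuous_of_discreteTopology ‖P‖ (fun i => by
      have h1 : ‖eZ i‖ = 1 := by
        have := lp.norm_single (E := fun _ : ℤ => ℂ) (p := 2) (by norm_num) i (1:ℂ)
        simpa [eZ] using this
      calc ‖(inner ℂ (eZ i) (P (eZ i)) : ℂ)‖ ≤ ‖eZ i‖ * ‖P (eZ i)‖ := norm_inner_le_norm _ _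
        _ = ‖P (eZ i)‖ := by rw [h1, one_mul]
        _ ≤ ‖P‖ * ‖eZ i‖ := P.le_opNorm _
        _ = ‖P‖ := by rw [h1, mul_one])

lemma diagBCF_apply (P : HZ →L[ℂ] HZ) (i : ℤ) :
    diagBCF P i = inner ℂ (eZ i) (P (eZ i)) := rfl

lemma diagBCF_lipschitz : LipschitzWith 1 diagBCF := by
  refine LipschitzWith.of_dist_le_mul fun P Q => ?_
  have h1 : ∀ i : ℤ, ‖eZ i‖ = 1 := fun i => by
    have := lp.norm_single (E := fun _ : ℤ => ℂ) (p := 2) (by norm_num) i (1:ℂ)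
    simpa [eZ] using this
  have : dist (diagBCF P) (diagBCF Q) ≤ dist P Q := by
    refine (BoundedContinuousFunction.dist_le dist_nonneg).2 fun i => ?_
    rw [dist_eq_norm, diagBCF_apply, diagBCF_apply, dist_eq_norm]
    calc ‖(inner ℂ (eZ i) (P (eZ i)) : ℂ) - inner ℂ (eZ i) (Q (eZ i))‖
        = ‖(inner ℂ (eZ i) ((P - Q) (eZ i)) : ℂ)‖ := by
          rw [ContinuousLinearMap.sub_apply, inner_sub_right]
      _ ≤ ‖eZ i‖ * ‖(P - Q) (eZ i)‖ := norm_inner_le_norm _ _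
      _ = ‖(P - Q) (eZ i)‖ := by rw [h1, one_mul]
      _ ≤ ‖P - Q‖ * ‖eZ i‖ := (P - Q).le_opNorm _
      _ = ‖P - Q‖ := by rw [h1, mul_one]
  simpa using this

/-- Intertwining a product through an operator. -/
lemma prod_intertwine (T : HZ →L[ℂ] HZ) :
    ∀ (k : ℕ) (f g : Fin k → (HZ →L[ℂ] HZ)),
    (∀ t, T * f t = g t * T) →
    T * (List.ofFn f).prod = (List.ofFn g).prod * T := by
  intro k
  induction k with
  | zero => intro f g _; simp [List.ofFn_zero]
  | succ k ih =>
    intro f g h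
    rw [List.ofFn_succ, List.prod_cons, List.ofFn_succ, List.prod_cons]
    calc T * (f 0 * (List.ofFn fun t => f t.succ).prod)
        = (T * f 0) * (List.ofFn fun t => f t.succ).prod := by rw [mul_assoc]
      _ = (g 0 * T) * (List.ofFn fun t => f t.succ).prod := by rw [h 0]
      _ = g 0 * (T * (List.ofFn fun t => f t.succ).prod) := by rw [mul_assoc]
      _ = g 0 * ((List.ofFn fun t => g t.succ).prod * T) := by
          rw [ih _ _ (fun t => h t.succ)]
      _ = g 0 * (List.ofFn fun t => g t.succ).prod * T := by rw [mul_assoc]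


end APDiagAux

open APDiagAux

set_option maxHeartbeats 1000000 in
set_option synthInstance.maxHeartbeats 400000 in
/-- Let `A = L(a₁) b₁ L(a₂) b₂ ⋯ L(a_k) b_k` be a finite product of
bounded Laurent operators `L(a_t)` (bi-infinite Toeplitz matrices, with entries
`⟨L(a_t) e_j, e_i⟩ = (a_t)_{i-j}`) and operators `b_t` of multiplication by almost
periodic functions on `ℤ`.  Then the main diagonal `D(A) = (⟨A e_i, e_i⟩)_{i∈ℤ}` of
`A` is an almost periodic function on `ℤ`. -/
theorem diag_of_laurent_ap_product_almostPeriodic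
    (k : ℕ)
    (L M : Fin k → (HZ →L[ℂ] HZ))
    (aL : Fin k → ℤ → ℂ)
    (b : Fin k → BoundedContinuousFunction ℤ ℂ)
    (hL : ∀ (t : Fin k) (i j : ℤ), (inner ℂ (eZ i) (L t (eZ j)) : ℂ) = aL t (i - j))
    (hM : ∀ (t : Fin k) (x : HZ) (m : ℤ), (M t x : ∀ _ : ℤ, ℂ) m = b t m * x m)
    (hb : ∀ t, AlmostPeriodic (b t))
    (A : HZ →L[ℂ] HZ)
    (hA : A = (List.ofFn fun t => L t * M t).prod) :
    ∃ d : BoundedContinuousFunction ℤ ℂ,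
      (∀ i : ℤ, d i = inner ℂ (eZ i) (A (eZ i))) ∧ AlmostPeriodic d := by
  classical
  refine ⟨diagBCF A, fun i => diagBCF_apply A i, ?_⟩
  -- the continuous map sending a tuple of bounded functions to the diagonal of the
  -- corresponding product operator
  set Ψ : (Fin k → BoundedContinuousFunction ℤ ℂ) → BoundedContinuousFunction ℤ ℂ :=
    fun c => diagBCF (List.ofFn fun t => L t * mult (c t)).prod with hΨ
  have hΨc : Continuous Ψ := by
    have hprod : Continuous fun N : Fin k → (HZ →L[ℂ] HZ) =>
        (List.ofFn fun t => L t * N t).prod := by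
      simp only [List.ofFn_eq_map]
      exact continuous_list_prod _ (fun t _ => continuous_const.mul (continuous_apply t))
    exact diagBCF_lipschitz.continuous.comp
      (hprod.comp (continuous_pi fun t => mult_continuous.comp (continuous_apply t)))
  -- the key shift identity
  have key : ∀ n : ℤ, shiftBCF (diagBCF A) n = Ψ (fun t => shiftBCF (b t) n) := by
    intro n
    have hfac : ∀ t : Fin k,
        tr n * (L t * M t) = (L t * mult (shiftBCF (b t) n)) * tr n := by
      intro t
      have hLe : ∀ i j : ℤ, (L t (eZ j) : ∀ _ : ℤ, ℂ) i = aL t (i - j) := by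
        intro i j
        rw [← inner_eZ i (L t (eZ j))]
        exact hL t i j
      have hLc : tr n * L t = L t * tr n := tr_comm_laurent (L t) (aL t) hLe n
      have hMc : tr n * M t = mult (shiftBCF (b t) n) * tr n := by
        refine ContinuousLinearMap.ext fun x => lp.ext (funext fun m => ?_)
        rw [ContinuousLinearMap.mul_apply, ContinuousLinearMap.mul_apply,
          tr_apply, hM t x (m + n), mult_apply, tr_apply]
        rfl
      calc tr n * (L t * M t) = (tr n * L t) * M t := by rw [mul_assoc]
        _ = (L t * tr n) * M t := by rw [hLc]
        _ = L t * (tr n * M t) := by rw [mul_assoc]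
        _ = L t * (mult (shiftBCF (b t) n) * tr n) := by rw [hMc]
        _ = (L t * mult (shiftBCF (b t) n)) * tr n := by rw [mul_assoc]
    have hint : tr n * A = (List.ofFn fun t => L t * mult (shiftBCF (b t) n)).prod * tr n := by
      rw [hA]
      exact prod_intertwine (tr n) k _ _ hfac
    ext i
    show diagBCF A (i + n) = diagBCF (List.ofFn fun t => L t * mult (shiftBCF (b t) n)).prod i
    rw [diagBCF_apply, diagBCF_apply, inner_eZ, inner_eZ]
    set P' := (List.ofFn fun t => L t * mult (shiftBCF (b t) n)).prod with hP'
    have h1 : P' (eZ i) = tr n (A (eZ (i + n))) := by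
      have h2 : tr n (eZ (i + n)) = eZ i := by
        rw [tr_eZ]
        congr 1
        omega
      calc P' (eZ i) = P' (tr n (eZ (i + n))) := by rw [h2]
        _ = (P' * tr n) (eZ (i + n)) := rfl
        _ = (tr n * A) (eZ (i + n)) := by rw [hint]
        _ = tr n (A (eZ (i + n))) := rfl
    rw [h1, tr_apply]
  -- compactness
  have hK : IsCompact (Set.univ.pi fun t : Fin k => closure (Set.range (shiftBCF (b t)))) :=
    isCompact_univ_pi hb
  have himg : IsCompact (Ψ '' (Set.univ.pi fun t : Fin k =>
      closure (Set.range (shiftBCF (b t))))) := hK.image hΨc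
  have hsub : Set.range (shiftBCF (diagBCF A)) ⊆
      Ψ '' (Set.univ.pi fun t : Fin k => closure (Set.range (shiftBCF (b t)))) := by
    rintro _ ⟨n, rfl⟩
    exact ⟨fun t => shiftBCF (b t) n,
      fun t _ => subset_closure ⟨n, rfl⟩, (key n).symm⟩
  exact himg.of_isClosed_subset isClosed_closure (closure_minimal hsub himg.isClosed)
end
end

section
/- Let A be a bounded operator on a Hilbert space H and P an orthogonal projection on H, and suppose A is invertible. Then the compression PAP : im P → im P is invertible if and only if (I−P)A^{−1}(I−P) : im(I−P) → im(I−P) is invertible (Kozak's identity). -/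
private theorem kozak_aux {R : Type*} [Ring R] (A B P : R) (hP : P * P = P)
    (hAB : A * B = 1) (hBA : B * A = 1)
    (h : IsUnit (P * A * P + (1 - P))) : IsUnit ((1 - P) * B * (1 - P) + P) := by
  obtain ⟨u, hu⟩ := h
  have hXXi : (u : R) * (↑u⁻¹ : R) = 1 := u.mul_inv
  have hXiX : (↑u⁻¹ : R) * (u : R) = 1 := u.inv_mul
  set C : R := P * ↑u⁻¹ * P with hC
  have hPP : ∀ x : R, P * (P * x) = P * x := fun x => by rw [← mul_assoc, hP]
  have hABr : ∀ x : R, A * (B * x) = x := fun x => by rw [← mul_assoc, hAB, one_mul]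
  have hBAr : ∀ x : R, B * (A * x) = x := fun x => by rw [← mul_assoc, hBA, one_mul]
  have hPX : P * (u : R) = P * A * P := by
    rw [hu]; simp only [mul_add, mul_sub, mul_one, mul_assoc, hPP, hP]; abel
  have hXP : (u : R) * P = P * A * P := by
    rw [hu]; simp only [add_mul, sub_mul, one_mul, mul_assoc, hP, hPP]; abel
  have hPCp : P * C = C := by rw [hC, ← mul_assoc, ← mul_assoc, hP]
  have hCPp : C * P = C := by rw [hC, mul_assoc, hP]
  have hPCr : ∀ x : R, P * (C * x) = C * x := fun x => by rw [← mul_assoc, hPCp]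
  have hCPr : ∀ x : R, C * (P * x) = C * x := fun x => by rw [← mul_assoc, hCPp]
  have h1 : P * A * P * C = P := by
    rw [hC]
    calc P * A * P * (P * ↑u⁻¹ * P) = (P * A * (P * P)) * ↑u⁻¹ * P := by noncomm_ring
    _ = (P * A * P) * ↑u⁻¹ * P := by rw [hP]
    _ = (P * ↑u) * ↑u⁻¹ * P := by rw [← hPX]
    _ = P * (↑u * ↑u⁻¹) * P := by rw [mul_assoc P]
    _ = P := by rw [hXXi, mul_one, hP]
  have h2 : C * (P * A * P) = P := by
    rw [hC]
    calc (P * ↑u⁻¹ * P) * (P * A * P) = P * ↑u⁻¹ * ((P * P) * A * P) := by noncomm_ring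
    _ = P * ↑u⁻¹ * (P * A * P) := by rw [hP]
    _ = P * ↑u⁻¹ * (↑u * P) := by rw [← hXP]
    _ = P * (↑u⁻¹ * ↑u) * P := by noncomm_ring
    _ = P := by rw [hXiX, mul_one, hP]
  have hPACp : P * A * C = P := by
    calc P * A * C = P * A * (P * C) := by rw [hPCp]
    _ = P * A * P * C := by noncomm_ring
    _ = P := h1
  have hCAPp : C * A * P = P := by
    calc C * A * P = C * (A * P) := by noncomm_ring
    _ = (C * P) * (A * P) := by rw [hCPp]
    _ = C * (P * A * P) := by noncomm_ring
    _ = P := h2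
  have hPACr : ∀ x : R, P * (A * (C * x)) = P * x := fun x => by
    rw [← mul_assoc, ← mul_assoc, hPACp]
  have hCAPr : ∀ x : R, C * (A * (P * x)) = P * x := fun x => by
    rw [← mul_assoc, ← mul_assoc, hCAPp]
  have hPACq : P * (A * C) = P := by rw [← mul_assoc, hPACp]
  have hCAPq : C * (A * P) = P := by rw [← mul_assoc, hCAPp]
  set D : R := (1 - P) * A * (1 - P) - (1 - P) * A * P * C * (P * A * (1 - P)) with hD
  have key1 : ((1 - P) * B * (1 - P) + P) * (D + P) = 1 := by
    rw [hD]
    simp only [mul_sub, sub_mul, mul_add, add_mul, mul_one, one_mul, mul_assoc]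
    simp only [hPP, hABr, hBAr, hP, hAB, hBA, hPCr, hCPr, hPCp, hCPp, hPACr, hCAPr,
      hPACq, hCAPq, mul_one, one_mul]
    abel
  have key2 : (D + P) * ((1 - P) * B * (1 - P) + P) = 1 := by
    rw [hD]
    simp only [mul_sub, sub_mul, mul_add, add_mul, mul_one, one_mul, mul_assoc]
    simp only [hPP, hABr, hBAr, hP, hAB, hBA, hPCr, hCPr, hPCp, hCPp, hPACr, hCAPr,
      hPACq, hCAPq, mul_one, one_mul]
    abel
  exact ⟨⟨(1 - P) * B * (1 - P) + P, D + P, key1, key2⟩, rfl⟩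

/-- **Kozak's identity.** Let `A` be an invertible bounded operator on
a Hilbert space `H` (with inverse `B`) and `P` an orthogonal projection on `H`.  Then
the compression `P A P : im P → im P` is invertible if and only if
`(I-P) A⁻¹ (I-P) : im (I-P) → im (I-P)` is invertible.  (Compressions acting on the
range of a projection `P` are encoded, as usual, by adding the complementary
projection: invertibility of `P A P` on `im P` is invertibility of `P A P + (I - P)`
on `H`.) -/
theorem kozak_identity {H : Type*} [NormedAddCommGroup H] [InnerProductSpace ℂ H]
    [CompleteSpace H]
    (A B P : H →L[ℂ] H)
    (hP_idem : P * P = P) (hP_sa : IsSelfAdjoint P)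
    (hAB : A * B = 1) (hBA : B * A = 1) :
    IsUnit (P * A * P + (1 - P)) ↔ IsUnit ((1 - P) * B * (1 - P) + P) := by
  constructor
  · exact kozak_aux A B P hP_idem hAB hBA
  · intro h
    have hQ : (1 - P) * (1 - P) = 1 - P := by
      rw [sub_mul, one_mul, mul_sub, mul_one, hP_idem]; abel
    have h' := kozak_aux B A (1 - P) hQ hBA hAB (by simpa [sub_sub_cancel] using h)
    simpa [sub_sub_cancel] using h'
end
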